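/- Let n ≥ 1, let A and B be 2n×2n complex matrices, let γ ∈ ℂ, and let d : Fin n → ℝ with sin(d_j) ≠ 0 for every j. Let E, C, S be the n×n diagonal matrices E = diag(e^{i d_j}), C = diag(cos d_j / sin d_j), S = diag(1 / sin d_j). Then det( A · fromBlocks(I, I, E, E⁻¹) + (iγ) • ( B · fromBlocks(−I, I, E, −E⁻¹) ) ) = ( ∏_{j} (−2i·sin d_j) ) · det( A + γ • ( B · fromBlocks(C, −S, −S, C) ) ). -/

import Mathlib

open Matrix Complex

private lemma dmts_aux1 (c s : ℂ) (h : s ≠ 0) :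
    c/s + (-(1/s)) * (c + s*I) = I * -1 := by field_simp; ring

private lemma dmts_aux2 (c s : ℂ) (h : s ≠ 0) :
    c/s + (-(1/s)) * (c - s*I) = I * 1 := by field_simp; ring

private lemma dmts_aux3 (c s : ℂ) (h : s ≠ 0) (hc : s^2 + c^2 = 1) :
    -(1/s) + (c/s) * (c + s*I) = I * (c + s*I) := by
  field_simp
  linear_combination hc - s^2*I_sq

private lemma dmts_aux4 (c s : ℂ) (h : s ≠ 0) (hc : s^2 + c^2 = 1) :
    -(1/s) + (c/s) * (c - s*I) = I * -(c - s*I) := by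
  field_simp
  linear_combination hc - s^2*I_sq

/-- The determinant identity converting the plane-wave matching determinant into the secular
determinant: `det(A·[[I,I],[E,E⁻¹]] + iγ B·[[−I,I],[E,−E⁻¹]])
  = (∏_j (−2i sin d_j)) det(A + γ B·[[C,−S],[−S,C]])`
with `E = diag(e^{i d_j})`, `C = diag(cot d_j)`, `S = diag(csc d_j)`. -/
theorem dirac_matching_to_secular_det
    (n : ℕ) (hn : 1 ≤ n)
    (A B : Matrix (Fin n ⊕ Fin n) (Fin n ⊕ Fin n) ℂ)
    (γ : ℂ) (d : Fin n → ℝ) (hd : ∀ j, Real.sin (d j) ≠ 0) :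
    (A * Matrix.fromBlocks 1 1
        (Matrix.diagonal fun j => Complex.exp (Complex.I * d j))
        (Matrix.diagonal fun j => Complex.exp (Complex.I * d j))⁻¹ +
      (Complex.I * γ) •
        (B * Matrix.fromBlocks (-1) 1
          (Matrix.diagonal fun j => Complex.exp (Complex.I * d j))
          (-(Matrix.diagonal fun j => Complex.exp (Complex.I * d j))⁻¹))).det =
    (∏ j, (-(2 * Complex.I) * (Real.sin (d j) : ℂ))) *
      (A + γ •
        (B * Matrix.fromBlocks
          (Matrix.diagonal fun j => ((Real.cos (d j) / Real.sin (d j) : ℝ) : ℂ))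
          (-(Matrix.diagonal fun j => ((1 / Real.sin (d j) : ℝ) : ℂ)))
          (-(Matrix.diagonal fun j => ((1 / Real.sin (d j) : ℝ) : ℂ)))
          (Matrix.diagonal fun j => ((Real.cos (d j) / Real.sin (d j) : ℝ) : ℂ)))).det := by
  have hsin : ∀ j, (Real.sin (d j) : ℂ) ≠ 0 := fun j =>
    Complex.ofReal_ne_zero.mpr (hd j)
  have hsc : ∀ j, ((Real.sin (d j) : ℂ))^2 + ((Real.cos (d j) : ℂ))^2 = 1 := fun j => by
    exact_mod_cast Real.sin_sq_add_cos_sq (d j)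
  have hexp : ∀ j, Complex.exp (Complex.I * d j)
      = (Real.cos (d j) : ℂ) + (Real.sin (d j) : ℂ) * Complex.I := by
    intro j
    rw [mul_comm, Complex.exp_mul_I]
    push_cast
    rfl
  have hexpn : ∀ j, Complex.exp (-(Complex.I * d j))
      = (Real.cos (d j) : ℂ) - (Real.sin (d j) : ℂ) * Complex.I := by
    intro j
    have h1 : -(Complex.I * (d j : ℂ)) = (-(d j : ℂ)) * Complex.I := by ring
    rw [h1, Complex.exp_mul_I, Complex.cos_neg, Complex.sin_neg]
    push_cast
    ring
  set E : Matrix (Fin n) (Fin n) ℂ :=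
    Matrix.diagonal fun j => Complex.exp (Complex.I * d j) with hEdef
  set F : Matrix (Fin n) (Fin n) ℂ :=
    Matrix.diagonal fun j => Complex.exp (-(Complex.I * d j)) with hFdef
  set C : Matrix (Fin n) (Fin n) ℂ :=
    Matrix.diagonal fun j => ((Real.cos (d j) / Real.sin (d j) : ℝ) : ℂ) with hCdef
  set S : Matrix (Fin n) (Fin n) ℂ :=
    Matrix.diagonal fun j => ((1 / Real.sin (d j) : ℝ) : ℂ) with hSdef
  have hEF : E * F = 1 := by
    rw [hEdef, hFdef, Matrix.diagonal_mul_diagonal]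
    have h1 : ∀ j, Complex.exp (Complex.I * d j) * Complex.exp (-(Complex.I * d j)) = 1 := by
      intro j; rw [← Complex.exp_add]; simp
    simp only [h1]
    exact Matrix.diagonal_one
  have hEinv : E⁻¹ = F := Matrix.inv_eq_right_inv hEF
  set K : Matrix (Fin n ⊕ Fin n) (Fin n ⊕ Fin n) ℂ := Matrix.fromBlocks C (-S) (-S) C with hKdef
  set M : Matrix (Fin n ⊕ Fin n) (Fin n ⊕ Fin n) ℂ := Matrix.fromBlocks 1 1 E F with hMdef
  set N : Matrix (Fin n ⊕ Fin n) (Fin n ⊕ Fin n) ℂ := Matrix.fromBlocks (-1) 1 E (-F) with hNdef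
  -- the four diagonal-block identities
  have smul_diag : ∀ (r : ℂ) (f : Fin n → ℂ),
      r • Matrix.diagonal f = Matrix.diagonal fun j => r * f j := by
    intro r f
    rw [← Matrix.diagonal_smul]
    rfl
  have hone : (1 : Matrix (Fin n) (Fin n) ℂ) = Matrix.diagonal fun _ => (1:ℂ) :=
    Matrix.diagonal_one.symm
  have hnegone : (-1 : Matrix (Fin n) (Fin n) ℂ) = Matrix.diagonal fun _ => (-1:ℂ) := by
    rw [hone, Matrix.diagonal_neg]
  have hb1 : C * 1 + (-S) * E = Complex.I • (-1 : Matrix (Fin n) (Fin n) ℂ) := by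
    rw [Matrix.mul_one, hSdef, hCdef, hEdef, Matrix.diagonal_neg,
      Matrix.diagonal_mul_diagonal, Matrix.diagonal_add, hnegone, smul_diag]
    refine congrArg Matrix.diagonal (funext fun j => ?_)
    rw [hexp j]
    rw [Complex.ofReal_div, Complex.ofReal_div, Complex.ofReal_one]
    exact dmts_aux1 _ _ (hsin j)
  have hb2 : C * 1 + (-S) * F = Complex.I • (1 : Matrix (Fin n) (Fin n) ℂ) := by
    rw [Matrix.mul_one, hSdef, hCdef, hFdef, Matrix.diagonal_neg,
      Matrix.diagonal_mul_diagonal, Matrix.diagonal_add, hone, smul_diag]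
    refine congrArg Matrix.diagonal (funext fun j => ?_)
    rw [hexpn j]
    rw [Complex.ofReal_div, Complex.ofReal_div, Complex.ofReal_one]
    exact dmts_aux2 _ _ (hsin j)
  have hb3 : (-S) * 1 + C * E = Complex.I • E := by
    rw [Matrix.mul_one, hSdef, hCdef, hEdef, Matrix.diagonal_neg,
      Matrix.diagonal_mul_diagonal, Matrix.diagonal_add, smul_diag]
    refine congrArg Matrix.diagonal (funext fun j => ?_)
    rw [hexp j]
    rw [Complex.ofReal_div, Complex.ofReal_div, Complex.ofReal_one]
    exact dmts_aux3 _ _ (hsin j) (hsc j)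
  have hb4 : (-S) * 1 + C * F = Complex.I • (-F) := by
    rw [Matrix.mul_one, hSdef, hCdef, hFdef, Matrix.diagonal_neg,
      Matrix.diagonal_mul_diagonal, Matrix.diagonal_add, Matrix.diagonal_neg, smul_diag]
    refine congrArg Matrix.diagonal (funext fun j => ?_)
    rw [hexpn j]
    rw [Complex.ofReal_div, Complex.ofReal_div, Complex.ofReal_one]
    exact dmts_aux4 _ _ (hsin j) (hsc j)
  have hKM : K * M = Complex.I • N := by
    rw [hKdef, hMdef, hNdef, Matrix.fromBlocks_multiply, Matrix.fromBlocks_smul,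
      hb1, hb2, hb3, hb4]
  have hfact : A * M + (Complex.I * γ) • (B * N) = (A + γ • (B * K)) * M := by
    rw [Matrix.add_mul, Matrix.smul_mul, Matrix.mul_assoc, hKM, Matrix.mul_smul,
      smul_smul, mul_comm γ Complex.I]
  have hdetM : M.det = ∏ j, (-(2 * Complex.I) * (Real.sin (d j) : ℂ)) := by
    rw [hMdef, Matrix.det_fromBlocks_one₁₁, Matrix.mul_one, hEdef, hFdef,
      Matrix.diagonal_sub, Matrix.det_diagonal]
    congr 1; funext j
    rw [hexp j, hexpn j]
    ring
  rw [hEinv]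
  calc (A * M + (Complex.I * γ) • (B * N)).det
      = ((A + γ • (B * K)) * M).det := by rw [hfact]
    _ = (A + γ • (B * K)).det * M.det := Matrix.det_mul _ _
    _ = _ := by rw [hdetM, mul_comm]
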